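/- Let H, H₁, H₂, A, Q be real numbers such that the denominator D = H[H(H₁−1)(H₂−1)−(H−1)] − A Q H₁ H₂ is nonzero and H₂ ≠ 1. Then setting K = H, K₁ = H₁, K₂ = H₂ in the two update formulas of the discrete Demoulin system, H₁₂ = −K(H−1)(K₂−1) / ( K[H(H₁−1)(H₂−1)−(H−1)](K₂−1) − A Q H₁ K₂ (H₂−1) ) and K₁₂ = −H(K−1)(H₁−1) / ( H[K(K₁−1)(K₂−1)−(K−1)](H₁−1) − A Q H₁ K₂ (K₁−1) ), the two right-hand sides are equal and both reduce to the discrete Tzitzéica formula H₁₂ = −H(H−1)/D (assuming also H₁ ≠ 1 and the second denominator nonzero). -/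

import Mathlib

theorem demoulin_tzitzeica_reduction (H H₁ H₂ A Q : ℝ)
    (D : ℝ) (hD : D = H * (H * (H₁ - 1) * (H₂ - 1) - (H - 1)) - A * Q * H₁ * H₂)
    (hD0 : D ≠ 0) (hH2 : H₂ ≠ 1) (hH1 : H₁ ≠ 1)
    (hD2 : H * (H * (H₁ - 1) * (H₂ - 1) - (H - 1)) * (H₁ - 1)
            - A * Q * H₁ * H₂ * (H₁ - 1) ≠ 0) :
    -(H * (H - 1) * (H₂ - 1)) /
        (H * (H * (H₁ - 1) * (H₂ - 1) - (H - 1)) * (H₂ - 1)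
          - A * Q * H₁ * H₂ * (H₂ - 1)) = -(H * (H - 1)) / D ∧
    -(H * (H - 1) * (H₁ - 1)) /
        (H * (H * (H₁ - 1) * (H₂ - 1) - (H - 1)) * (H₁ - 1)
          - A * Q * H₁ * H₂ * (H₁ - 1)) = -(H * (H - 1)) / D := by
  have h2 : H₂ - 1 ≠ 0 := sub_ne_zero.mpr hH2
  have h1 : H₁ - 1 ≠ 0 := sub_ne_zero.mpr hH1
  have e1 : H * (H * (H₁ - 1) * (H₂ - 1) - (H - 1)) * (H₂ - 1)
      - A * Q * H₁ * H₂ * (H₂ - 1) = D * (H₂ - 1) := by rw [hD]; ring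
  have e2 : H * (H * (H₁ - 1) * (H₂ - 1) - (H - 1)) * (H₁ - 1)
      - A * Q * H₁ * H₂ * (H₁ - 1) = D * (H₁ - 1) := by rw [hD]; ring
  have e3 : -(H * (H - 1) * (H₂ - 1)) = -(H * (H - 1)) * (H₂ - 1) := by ring
  have e4 : -(H * (H - 1) * (H₁ - 1)) = -(H * (H - 1)) * (H₁ - 1) := by ring
  exact ⟨by rw [e1, e3]; field_simp, by rw [e2, e4]; field_simp⟩
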